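/- arXiv:2207.01818 — 2 statements merged into one kernel-verified Lean document; each statement's English description precedes it below -/
import Mathlib

section
/- Let m, N ≥ 1 and let A_1, …, A_m be real matrices with A_j of size N × N^j. Suppose x : ℝ → Matrix (Fin N) (Fin 1) ℝ is differentiable and satisfies the nonlinear ODE dx/dt = Σ_{j=1}^m A_j · x^⊗j for all t. Define A_j^i recursively by A_j^1 = A_j and A_j^i = A_j ⊗ I^⊗(i-1) + I ⊗ A_j^(i-1), where I is the N × N identity. Then for every i ≥ 1 the Kronecker power x^⊗i satisfies the linear relation d/dt (x(t)^⊗i) = Σ_{j=1}^m A_j^i · x(t)^⊗(i+j-1) for all t (Carleman embedding: the infinite vector X = (x, x^⊗2, x^⊗3, …) satisfies the linear system dX/dt = A_c X). -/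
open Matrix Kronecker

/-- Kronecker product of real matrices, with the index types flattened to `Fin`
along the canonical equivalences `Fin a × Fin c ≃ Fin (a * c)`. -/
noncomputable def kmul {a b c d : ℕ} (A : Matrix (Fin a) (Fin b) ℝ)
    (B : Matrix (Fin c) (Fin d) ℝ) : Matrix (Fin (a * c)) (Fin (b * d)) ℝ :=
  Matrix.reindex finProdFinEquiv finProdFinEquiv (A ⊗ₖ B)

/-- The `i`-th Kronecker power of a column vector: `x^⊗0 = (1)`, `x^⊗(i+1) = x ⊗ x^⊗i`,
a column vector of length `N ^ i`. -/
noncomputable def kpow {N : ℕ} (x : Matrix (Fin N) (Fin 1) ℝ) :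
    (i : ℕ) → Matrix (Fin (N ^ i)) (Fin 1) ℝ
  | 0 => fun _ _ => 1
  | i + 1 => Matrix.reindex (finCongr (pow_succ' N i).symm) (Equiv.refl (Fin 1))
      (kmul x (kpow x i))

/-- The Carleman transfer matrices `A_j^i` of size `N^i × N^(i+j-1)`, defined recursively by
`A_j^1 = A_j` and `A_j^i = A_j ⊗ I^⊗(i-1) + I ⊗ A_j^(i-1)` for `i ≥ 2`, where `I^⊗m` is the
`m`-fold Kronecker power of the `N × N` identity, i.e. the identity of size `N^m`. -/
noncomputable def carlemanBlock (N j : ℕ) (Aj : Matrix (Fin N) (Fin (N ^ j)) ℝ) :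
    (i : ℕ) → Matrix (Fin (N ^ i)) (Fin (N ^ (i + j - 1))) ℝ
  | 0 => 0
  | 1 => Matrix.reindex (finCongr (pow_one N).symm)
      (finCongr (by congr 1; omega : N ^ j = N ^ (1 + j - 1))) Aj
  | (i + 2) =>
      Matrix.reindex (finCongr (by rw [← pow_succ'] : N * N ^ (i + 1) = N ^ (i + 2)))
        (finCongr (by rw [← pow_add]; congr 1; omega :
          N ^ j * N ^ (i + 1) = N ^ (i + 2 + j - 1)))
        (kmul Aj (1 : Matrix (Fin (N ^ (i + 1))) (Fin (N ^ (i + 1))) ℝ))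
      +
      Matrix.reindex (finCongr (by rw [← pow_succ'] : N * N ^ (i + 1) = N ^ (i + 2)))
        (finCongr (by rw [← pow_succ']; congr 1; omega :
          N * N ^ (i + 1 + j - 1) = N ^ (i + 2 + j - 1)))
        (kmul (1 : Matrix (Fin N) (Fin N) ℝ) (carlemanBlock N j Aj (i + 1)))


section CarlemanAux

lemma kpow_zero_apply {N : ℕ} (x : Matrix (Fin N) (Fin 1) ℝ) (p : Fin (N ^ 0)) (q : Fin 1) :
    kpow x 0 p q = 1 := rfl

lemma kmul_apply' {a b c d : ℕ} (A : Matrix (Fin a) (Fin b) ℝ) (B : Matrix (Fin c) (Fin d) ℝ)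
    (p : Fin (a * c)) (q : Fin (b * d)) :
    kmul A B p q = A (Fin.divNat p) (Fin.divNat q) * B (Fin.modNat p) (Fin.modNat q) := rfl

lemma kmul_mul {a b c d e f : ℕ} (M : Matrix (Fin a) (Fin b) ℝ) (B : Matrix (Fin c) (Fin d) ℝ)
    (u : Matrix (Fin b) (Fin e) ℝ) (v : Matrix (Fin d) (Fin f) ℝ) :
    kmul M B * kmul u v = kmul (M * u) (B * v) := by
  simp only [kmul, Matrix.reindex_apply, Matrix.submatrix_mul_equiv,
    Matrix.mul_kronecker_mul]

lemma kpow_congr {N : ℕ} (x : Matrix (Fin N) (Fin 1) ℝ) {a b : ℕ} (h : a = b)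
    {p : Fin (N ^ a)} {p' : Fin (N ^ b)} (hp : p.val = p'.val) (q : Fin 1) :
    kpow x a p q = kpow x b p' q := by
  subst h; cases Fin.ext hp; rfl

lemma kpow_succ_apply' {N : ℕ} (x : Matrix (Fin N) (Fin 1) ℝ) (i : ℕ)
    (p : Fin (N ^ (i + 1))) (q : Fin 1)
    (h1 : p.val / N ^ i < N) (h2 : p.val % N ^ i < N ^ i) :
    kpow x (i + 1) p q = x ⟨p.val / N ^ i, h1⟩ q * kpow x i ⟨p.val % N ^ i, h2⟩ q := by
  have hq : q = 0 := Subsingleton.elim _ _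
  subst hq; rfl

lemma kpow_add {N : ℕ} (x : Matrix (Fin N) (Fin 1) ℝ) (a b : ℕ) :
    ∀ (p : Fin (N ^ (a + b))) (q : Fin 1)
      (h1 : p.val / N ^ b < N ^ a) (h2 : p.val % N ^ b < N ^ b),
    kpow x (a + b) p q = kpow x a ⟨p.val / N ^ b, h1⟩ q * kpow x b ⟨p.val % N ^ b, h2⟩ q := by
  induction a with
  | zero =>
    intro p q h1 h2
    have hb : p.val < N ^ b := by
      have := p.2
      have h : N ^ (0 + b) = N ^ b := by rw [Nat.zero_add]
      omega
    have : kpow x 0 ⟨p.val / N ^ b, h1⟩ q = 1 := rfl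
    rw [this, one_mul]
    exact kpow_congr x (Nat.zero_add b) (by simp [Nat.mod_eq_of_lt hb]) q
  | succ a ih =>
    intro p q h1 h2
    have key : N ^ (a + b) = N ^ b * N ^ a := by rw [← pow_add]; ring_nf
    have hpv : p.val < N ^ (a + b) * N := by
      have := p.2
      have : N ^ (a + 1 + b) = N ^ (a + b) * N := by rw [← pow_succ]; congr 1; omega
      omega
    have hd : p.val / N ^ (a + b) < N :=
      Nat.div_lt_of_lt_mul (by rw [mul_comm] at hpv ⊢; exact hpv)
    have hNab : 0 < N ^ (a + b) := by
      rcases Nat.eq_zero_or_pos (N ^ (a+b)) with h | h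
      · rw [h, zero_mul] at hpv; omega
      · exact h
    have hm : p.val % N ^ (a + b) < N ^ (a + b) := Nat.mod_lt _ hNab
    have step : kpow x (a + 1 + b) p q
        = x ⟨p.val / N ^ (a + b), hd⟩ q * kpow x (a + b) ⟨p.val % N ^ (a + b), hm⟩ q := by
      have e : a + 1 + b = (a + b) + 1 := by omega
      have := kpow_congr x e (p' := Fin.cast (by rw [e]) p) rfl q
      rw [this]
      exact kpow_succ_apply' x (a+b) _ q hd hm
    rw [step]
    have hNb : 0 < N ^ b := by
      rcases Nat.eq_zero_or_pos (N ^ b) with h | h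
      · rw [key, h, zero_mul] at hNab; omega
      · exact h
    have hd2 : (p.val % N ^ (a + b)) / N ^ b < N ^ a := by
      have : p.val % N ^ (a+b) < N ^ b * N ^ a := key ▸ hm
      exact Nat.div_lt_of_lt_mul this
    have hm2 : (p.val % N ^ (a + b)) % N ^ b < N ^ b := Nat.mod_lt _ hNb
    rw [ih _ q hd2 hm2]
    have e1 : p.val / N ^ (a + b) = p.val / N ^ b / N ^ a := by
      rw [Nat.div_div_eq_div_mul, ← key]
    have e2 : (p.val % N ^ (a + b)) / N ^ b = (p.val / N ^ b) % N ^ a := by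
      rw [key, Nat.mod_mul_right_div_self]
    have e3 : (p.val % N ^ (a + b)) % N ^ b = p.val % N ^ b := by
      rw [key]; exact Nat.mod_mod_of_dvd _ (dvd_mul_right _ _)
    have sform : kpow x (a + 1) ⟨p.val / N ^ b, h1⟩ q
        = x ⟨p.val / N ^ b / N ^ a, by
            have := h1; have hh : N ^ (a+1) = N ^ a * N := pow_succ N a
            exact Nat.div_lt_of_lt_mul (by omega)⟩ q
          * kpow x a ⟨(p.val / N ^ b) % N ^ a, Nat.mod_lt _ (by
              rcases Nat.eq_zero_or_pos (N ^ a) with h | h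
              · exfalso; rw [key, h, mul_zero] at hNab; omega
              · exact h)⟩ q :=
      kpow_succ_apply' x a _ q _ _
    rw [sform, mul_assoc]
    congr 1
    · exact congrArg (fun z => x z q) (Fin.ext e1)
    congr 1
    · exact kpow_congr x rfl e2 q
    · exact kpow_congr x rfl e3 q

lemma mul_entry_congr {a a' b b' c c' : ℕ} (ha : a = a') (hb : b = b') (hc : c = c')
    (M : Matrix (Fin a) (Fin b) ℝ) (M' : Matrix (Fin a') (Fin b') ℝ)
    (v : Matrix (Fin b) (Fin c) ℝ) (v' : Matrix (Fin b') (Fin c') ℝ)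
    (hM : ∀ p k, M p k = M' (Fin.cast ha p) (Fin.cast hb k))
    (hv : ∀ k q, v k q = v' (Fin.cast hb k) (Fin.cast hc q))
    (p : Fin a) (q : Fin c) :
    (M * v) p q = (M' * v') (Fin.cast ha p) (Fin.cast hc q) := by
  subst ha; subst hb; subst hc
  simp only [Matrix.mul_apply]
  refine Finset.sum_congr rfl fun k _ => ?_
  rw [hM, hv]
  simp only [Fin.cast_refl, id_eq]

end CarlemanAux

section CarlemanClaims

lemma entry_congr {a b : ℕ} (M : Matrix (Fin a) (Fin b) ℝ) {p p' : Fin a} {q q' : Fin b}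
    (hp : p.val = p'.val) (hq : q.val = q'.val) : M p q = M p' q' := by
  cases Fin.ext hp; cases Fin.ext hq; rfl

lemma carleman_base_claim (N j : ℕ) (Aj : Matrix (Fin N) (Fin (N ^ j)) ℝ)
    (x : Matrix (Fin N) (Fin 1) ℝ) (p : Fin (N ^ 1)) (q : Fin 1) (hp : p.val < N) :
    (carlemanBlock N j Aj 1 * kpow x (1 + j - 1)) p q = (Aj * kpow x j) ⟨p.val, hp⟩ q := by
  have ha : N ^ 1 = N := pow_one N
  have hb : N ^ (1 + j - 1) = N ^ j := by congr 1; omega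
  have := mul_entry_congr ha hb rfl (carlemanBlock N j Aj 1) Aj
    (kpow x (1 + j - 1)) (kpow x j)
    (fun p k => rfl)
    (fun k q => kpow_congr x (show 1 + j - 1 = j by omega) (p := k) (p' := Fin.cast hb k) rfl q)
    p q
  rw [this]
  exact entry_congr _ rfl rfl

lemma carleman_step_claim (N j i : ℕ) (Aj : Matrix (Fin N) (Fin (N ^ j)) ℝ)
    (x : Matrix (Fin N) (Fin 1) ℝ) (p : Fin (N ^ (i + 2))) (q : Fin 1)
    (hd : p.val / N ^ (i + 1) < N) (hm : p.val % N ^ (i + 1) < N ^ (i + 1)) :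
    (carlemanBlock N j Aj (i + 2) * kpow x (i + 2 + j - 1)) p q
      = (Aj * kpow x j) ⟨p.val / N ^ (i + 1), hd⟩ q
          * kpow x (i + 1) ⟨p.val % N ^ (i + 1), hm⟩ q
        + x ⟨p.val / N ^ (i + 1), hd⟩ q
          * (carlemanBlock N j Aj (i + 1) * kpow x (i + 1 + j - 1))
              ⟨p.val % N ^ (i + 1), hm⟩ q := by
  have hq : q = 0 := Subsingleton.elim _ _
  subst hq
  have hNpos : 0 < N := by
    rcases Nat.eq_zero_or_pos N with h | h
    · exfalso
      have h0 : N ^ (i + 2) = 0 := by rw [h]; simp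
      have h1 := p.2
      omega
    · exact h
  have hNp : ∀ k : ℕ, 0 < N ^ k := fun k => Nat.pow_pos hNpos
  have ha : N ^ (i + 2) = N * N ^ (i + 1) := by rw [← pow_succ']
  have hbA : N ^ (i + 2 + j - 1) = N ^ j * N ^ (i + 1) := by
    rw [← pow_add]; congr 1; omega
  have hbB : N ^ (i + 2 + j - 1) = N * N ^ (i + 1 + j - 1) := by
    rw [← pow_succ']; congr 1; omega
  have hc : (1 : ℕ) = 1 * 1 := rfl
  have hsplit : carlemanBlock N j Aj (i + 2) * kpow x (i + 2 + j - 1)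
      = (Matrix.reindex (finCongr ha.symm) (finCongr hbA.symm)
          (kmul Aj (1 : Matrix (Fin (N ^ (i + 1))) (Fin (N ^ (i + 1))) ℝ)))
          * kpow x (i + 2 + j - 1)
        + (Matrix.reindex (finCongr ha.symm) (finCongr hbB.symm)
          (kmul (1 : Matrix (Fin N) (Fin N) ℝ) (carlemanBlock N j Aj (i + 1))))
          * kpow x (i + 2 + j - 1) := by
    rw [← Matrix.add_mul]
    rfl
  rw [hsplit, Matrix.add_apply]
  congr 1
  · -- term A
    have hA := mul_entry_congr ha hbA hc
      (Matrix.reindex (finCongr ha.symm) (finCongr hbA.symm)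
        (kmul Aj (1 : Matrix (Fin (N ^ (i + 1))) (Fin (N ^ (i + 1))) ℝ)))
      (kmul Aj (1 : Matrix (Fin (N ^ (i + 1))) (Fin (N ^ (i + 1))) ℝ))
      (kpow x (i + 2 + j - 1))
      (kmul (kpow x j) (kpow x (i + 1)))
      (fun p k => rfl)
      (fun k r => by
        have hr : r = 0 := Subsingleton.elim _ _
        subst hr
        have e : i + 2 + j - 1 = j + (i + 1) := by omega
        have h1 : (Fin.cast hbA k).val / N ^ (i + 1) < N ^ j :=
          Nat.div_lt_of_lt_mul
            (lt_of_lt_of_eq (Fin.cast hbA k).2 (Nat.mul_comm _ _))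
        have h2 : (Fin.cast hbA k).val % N ^ (i + 1) < N ^ (i + 1) :=
          Nat.mod_lt _ (hNp _)
        have hcongr := kpow_congr x e (p' := Fin.cast (by rw [e]) k) rfl (0 : Fin 1)
        rw [hcongr, kpow_add x j (i + 1) _ 0 (by simpa using h1) (by simpa using h2),
          kmul_apply']
        refine congrArg₂ (· * ·) (entry_congr _ ?_ ?_) (entry_congr _ ?_ ?_) <;>
          simp [Fin.divNat, Fin.modNat])
      p 0
    rw [hA, kmul_mul, Matrix.one_mul, kmul_apply']
    refine congrArg₂ (· * ·) (entry_congr _ ?_ ?_) (entry_congr _ ?_ ?_) <;>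
      simp [Fin.divNat, Fin.modNat]
  · -- term B
    have hB := mul_entry_congr ha hbB hc
      (Matrix.reindex (finCongr ha.symm) (finCongr hbB.symm)
        (kmul (1 : Matrix (Fin N) (Fin N) ℝ) (carlemanBlock N j Aj (i + 1))))
      (kmul (1 : Matrix (Fin N) (Fin N) ℝ) (carlemanBlock N j Aj (i + 1)))
      (kpow x (i + 2 + j - 1))
      (kmul x (kpow x (i + 1 + j - 1)))
      (fun p k => rfl)
      (fun k r => by
        have hr : r = 0 := Subsingleton.elim _ _
        subst hr
        have e : i + 2 + j - 1 = (i + 1 + j - 1) + 1 := by omega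
        have h1 : (Fin.cast hbB k).val / N ^ (i + 1 + j - 1) < N :=
          Nat.div_lt_of_lt_mul
            (lt_of_lt_of_eq (Fin.cast hbB k).2 (Nat.mul_comm _ _))
        have h2 : (Fin.cast hbB k).val % N ^ (i + 1 + j - 1) < N ^ (i + 1 + j - 1) :=
          Nat.mod_lt _ (hNp _)
        have hcongr := kpow_congr x e (p' := Fin.cast (by rw [e]) k) rfl (0 : Fin 1)
        rw [hcongr, kpow_succ_apply' x (i + 1 + j - 1) _ 0 (by simpa using h1)
          (by simpa using h2), kmul_apply']
        refine congrArg₂ (· * ·) (entry_congr _ ?_ ?_) (entry_congr _ ?_ ?_) <;>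
          simp [Fin.divNat, Fin.modNat])
      p 0
    rw [hB, kmul_mul, Matrix.one_mul, kmul_apply']
    refine congrArg₂ (· * ·) (entry_congr _ ?_ ?_) (entry_congr _ ?_ ?_) <;>
      simp [Fin.divNat, Fin.modNat]

end CarlemanClaims

/-- Carleman embedding: if `x` solves the nonlinear ODE `dx/dt = ∑_{j=1}^m A_j · x^⊗j`
(entrywise), then for every `i ≥ 1` the Kronecker power `x^⊗i` solves the linear relation
`d/dt (x^⊗i) = ∑_{j=1}^m A_j^i · x^⊗(i+j-1)`; i.e. the infinite vector
`X = (x, x^⊗2, x^⊗3, …)` satisfies the linear system `dX/dt = A_c X`. -/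
theorem carleman_embedding (m N : ℕ) (hm : 1 ≤ m) (hN : 1 ≤ N)
    (A : (j : ℕ) → Matrix (Fin N) (Fin (N ^ j)) ℝ)
    (x : ℝ → Matrix (Fin N) (Fin 1) ℝ)
    (hx : ∀ t : ℝ, ∀ (p : Fin N) (q : Fin 1),
      HasDerivAt (fun s => x s p q)
        ((∑ j ∈ Finset.Icc 1 m, A j * kpow (x t) j) p q) t) :
    ∀ i : ℕ, 1 ≤ i → ∀ t : ℝ, ∀ (p : Fin (N ^ i)) (q : Fin 1),
      HasDerivAt (fun s => kpow (x s) i p q)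
        ((∑ j ∈ Finset.Icc 1 m, carlemanBlock N j (A j) i * kpow (x t) (i + j - 1)) p q)
        t := by
  have main : ∀ k : ℕ, ∀ t : ℝ, ∀ (p : Fin (N ^ (k + 1))) (q : Fin 1),
      HasDerivAt (fun s => kpow (x s) (k + 1) p q)
        ((∑ j ∈ Finset.Icc 1 m,
          carlemanBlock N j (A j) (k + 1) * kpow (x t) (k + 1 + j - 1)) p q) t := by
    intro k
    induction k with
    | zero =>
      intro t p q
      have hq : q = 0 := Subsingleton.elim _ _
      subst hq
      have hp : p.val < N := by
        have := p.2
        have h1 : N ^ (0 + 1) = N := by rw [Nat.zero_add, pow_one]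
        omega
      show HasDerivAt (fun s => kpow (x s) 1 p 0)
        ((∑ j ∈ Finset.Icc 1 m,
          carlemanBlock N j (A j) 1 * kpow (x t) (1 + j - 1)) p 0) t
      have fe : (fun s => kpow (x s) 1 p 0) = fun s => x s ⟨p.val, hp⟩ 0 := by
        funext s
        rw [kpow_succ_apply' (x s) 0 p 0
          (by simpa using hp) (by simp [Nat.mod_one])]
        rw [kpow_zero_apply, mul_one]
        exact entry_congr _ (by simp) rfl
      rw [fe]
      have hval : (∑ j ∈ Finset.Icc 1 m,
          carlemanBlock N j (A j) 1 * kpow (x t) (1 + j - 1)) p 0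
          = (∑ j ∈ Finset.Icc 1 m, A j * kpow (x t) j) ⟨p.val, hp⟩ 0 := by
        rw [Matrix.sum_apply, Matrix.sum_apply]
        exact Finset.sum_congr rfl fun j _ =>
          carleman_base_claim N j (A j) (x t) p 0 hp
      rw [hval]
      exact hx t ⟨p.val, hp⟩ 0
    | succ k ih =>
      intro t p q
      have hq : q = 0 := Subsingleton.elim _ _
      subst hq
      show HasDerivAt (fun s => kpow (x s) (k + 2) p 0)
        ((∑ j ∈ Finset.Icc 1 m,
          carlemanBlock N j (A j) (k + 2) * kpow (x t) (k + 2 + j - 1)) p 0) t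
      have hd : p.val / N ^ (k + 1) < N :=
        Nat.div_lt_of_lt_mul (lt_of_lt_of_eq p.2 (pow_succ N (k + 1)))
      have hm' : p.val % N ^ (k + 1) < N ^ (k + 1) :=
        Nat.mod_lt _ (Nat.pow_pos hN)
      have fe : (fun s => kpow (x s) (k + 2) p 0)
          = fun s => x s ⟨p.val / N ^ (k + 1), hd⟩ 0
              * kpow (x s) (k + 1) ⟨p.val % N ^ (k + 1), hm'⟩ 0 :=
        funext fun s => kpow_succ_apply' (x s) (k + 1) p 0 hd hm'
      rw [fe]
      have hD := (hx t ⟨p.val / N ^ (k + 1), hd⟩ 0).mul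
        (ih t ⟨p.val % N ^ (k + 1), hm'⟩ 0)
      refine hD.congr_deriv (Eq.symm ?_)
      rw [Matrix.sum_apply]
      calc ∑ j ∈ Finset.Icc 1 m,
            (carlemanBlock N j (A j) (k + 2) * kpow (x t) (k + 2 + j - 1)) p 0
          = ∑ j ∈ Finset.Icc 1 m,
            ((A j * kpow (x t) j) ⟨p.val / N ^ (k + 1), hd⟩ 0
                * kpow (x t) (k + 1) ⟨p.val % N ^ (k + 1), hm'⟩ 0
              + x t ⟨p.val / N ^ (k + 1), hd⟩ 0
                * (carlemanBlock N j (A j) (k + 1) * kpow (x t) (k + 1 + j - 1))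
                    ⟨p.val % N ^ (k + 1), hm'⟩ 0) :=
            Finset.sum_congr rfl fun j _ =>
              carleman_step_claim N j k (A j) (x t) p 0 hd hm'
        _ = (∑ j ∈ Finset.Icc 1 m, (A j * kpow (x t) j) ⟨p.val / N ^ (k + 1), hd⟩ 0)
                * kpow (x t) (k + 1) ⟨p.val % N ^ (k + 1), hm'⟩ 0
              + x t ⟨p.val / N ^ (k + 1), hd⟩ 0
                * ∑ j ∈ Finset.Icc 1 m,
                  (carlemanBlock N j (A j) (k + 1) * kpow (x t) (k + 1 + j - 1))
                    ⟨p.val % N ^ (k + 1), hm'⟩ 0 := by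
            rw [Finset.sum_add_distrib, Finset.sum_mul, Finset.mul_sum]
        _ = (∑ j ∈ Finset.Icc 1 m, A j * kpow (x t) j) ⟨p.val / N ^ (k + 1), hd⟩ 0
                * kpow (x t) (k + 1) ⟨p.val % N ^ (k + 1), hm'⟩ 0
              + x t ⟨p.val / N ^ (k + 1), hd⟩ 0
                * (∑ j ∈ Finset.Icc 1 m,
                    carlemanBlock N j (A j) (k + 1) * kpow (x t) (k + 1 + j - 1))
                    ⟨p.val % N ^ (k + 1), hm'⟩ 0 := by
            rw [Matrix.sum_apply, Matrix.sum_apply]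
  intro i hi t p q
  obtain ⟨k, rfl⟩ : ∃ k, i = k + 1 := ⟨i - 1, by omega⟩
  exact main k t p q
end

section
/- Let α ∈ ℝ, n ≥ 1, and let M be the n × n real matrix with M(k, k+1) = -(k+1)·α for 0 ≤ k ≤ n-2 and all other entries zero (the order-n truncated Carleman matrix of ẏ = -α y²). Let Y : ℝ → ℝ^n be the solution of the linear ODE Y'(t) = M · Y(t) with Y(0) = (1, 1, …, 1)^T. Then the first component of Y is the partial geometric sum: Y₁(t) = Σ_{k=0}^{n-1} (-α t)^k for all t ∈ ℝ. -/
open Matrix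

lemma choose_cross (k i : ℕ) :
    (i + 1) * Nat.choose (k + i + 1) (i + 1) = (k + 1) * Nat.choose (k + i + 1) i := by
  have h1 := Nat.add_one_mul_choose_eq (k + i) i
  have h2 := Nat.add_one_mul_choose_eq (k + i) k
  have hs1 : (k + i).choose i = (k + i).choose k := Nat.choose_symm_of_eq_add (by omega)
  have hs2 : (k + i + 1).choose (k + 1) = (k + i + 1).choose i :=
    Nat.choose_symm_of_eq_add (by omega)
  rw [mul_comm, ← h1, hs1, h2, hs2, mul_comm]

/-- Let `M` be the order-`n` truncated Carleman matrix of `ẏ = -α y²` and let `Y` solve the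
linear system `Y' = M *ᵥ Y` with `Y 0 = (1, …, 1)ᵀ`. Then the first component of `Y` is the
partial geometric sum `Y₁ t = ∑_{k=0}^{n-1} (-α t)^k`. -/
theorem truncated_carleman_first_component (α : ℝ) (n : ℕ) (hn : 1 ≤ n)
    (M : Matrix (Fin n) (Fin n) ℝ)
    (hM : ∀ k l : Fin n, M k l =
      if (l : ℕ) = (k : ℕ) + 1 then -(((k : ℕ) : ℝ) + 1) * α else 0)
    (Y : ℝ → Fin n → ℝ)
    (hY : ∀ t, HasDerivAt Y (M *ᵥ Y t) t)
    (hY0 : Y 0 = fun _ => 1) :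
    ∀ t : ℝ, Y t ⟨0, hn⟩ = ∑ k ∈ Finset.range n, (-α * t) ^ k := by
  classical
  -- The explicit solution
  set Z : ℝ → Fin n → ℝ := fun t k => ∑ j ∈ Finset.range (n - (k : ℕ)),
      (((k : ℕ) + j).choose j : ℝ) * (-α) ^ j * t ^ j with hZdef
  -- Formula for M *ᵥ v
  have hMV : ∀ (v : Fin n → ℝ) (k : Fin n), (M *ᵥ v) k =
      if h : (k : ℕ) + 1 < n then (-(((k : ℕ) : ℝ) + 1)) * α * v ⟨(k : ℕ) + 1, h⟩ else 0 := by
    intro v k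
    rw [Matrix.mulVec, dotProduct]
    split
    · next h =>
      rw [Finset.sum_eq_single (⟨(k : ℕ) + 1, h⟩ : Fin n)]
      · rw [hM]; simp
      · intro l _ hl
        rw [hM]
        rw [if_neg, zero_mul]
        intro hc
        exact hl (Fin.ext hc)
      · simp
    · next h =>
      apply Finset.sum_eq_zero
      intro l _
      rw [hM, if_neg, zero_mul]
      intro hc
      exact h (hc ▸ l.isLt)
  -- Z solves the ODE
  have hZderiv : ∀ t, HasDerivAt Z (M *ᵥ Z t) t := by
    intro t
    rw [hasDerivAt_pi]
    intro k
    have hbase : HasDerivAt (fun s => Z s k)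
        (∑ j ∈ Finset.range (n - (k : ℕ)),
          (((k : ℕ) + j).choose j : ℝ) * (-α) ^ j * ((j : ℝ) * t ^ (j - 1))) t := by
      apply HasDerivAt.fun_sum
      intro j _
      exact (hasDerivAt_pow j t).const_mul _
    refine HasDerivAt.congr_deriv hbase (Eq.symm ?_)
    rw [hMV]
    split
    · next h =>
      have hm : n - (k : ℕ) = (n - ((k : ℕ) + 1)) + 1 := by omega
      rw [hm, Finset.sum_range_succ']
      simp only [Nat.cast_zero, pow_zero, mul_one, zero_mul, mul_zero, add_zero]
      rw [hZdef]
      simp only []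
      rw [Finset.mul_sum]
      apply Finset.sum_congr rfl
      intro i _
      have hc := choose_cross (k : ℕ) i
      have hc' : ((i : ℝ) + 1) * (((k : ℕ) + i + 1).choose (i + 1) : ℝ)
          = (((k : ℕ) : ℝ) + 1) * (((k : ℕ) + i + 1).choose i : ℝ) := by
        exact_mod_cast hc
      have h1 : ((k : ℕ) + (i + 1)) = (k : ℕ) + i + 1 := by omega
      have h2 : (((⟨(k : ℕ) + 1, h⟩ : Fin n) : ℕ) + i) = (k : ℕ) + i + 1 := by simp; omega
      rw [h1, h2]
      have : ((i + 1 : ℕ) : ℝ) = (i : ℝ) + 1 := by push_cast; ring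
      rw [pow_succ]
      simp only [Nat.add_sub_cancel, this]
      linear_combination ((-α) ^ i * α * t ^ i) * hc'
    · next h =>
      have hm : n - (k : ℕ) = 1 := by omega
      rw [hm]
      simp
  -- initial condition
  have hZ0 : Z 0 = fun _ => 1 := by
    funext k
    rw [hZdef]
    simp only []
    rw [Finset.sum_eq_single 0]
    · simp
    · intro j _ hj
      simp [zero_pow hj]
    · intro hc
      exact absurd (Finset.mem_range.mpr (by omega : 0 < n - (k : ℕ))) hc
  -- Lipschitz constant
  set L : (Fin n → ℝ) →L[ℝ] (Fin n → ℝ) := LinearMap.toContinuousLinearMap M.mulVecLin with hL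
  have hlip : ∀ s : ℝ, LipschitzWith ‖L‖₊ (fun y : Fin n → ℝ => M *ᵥ y) := by
    intro s
    have := L.lipschitz
    exact this
  -- uniqueness
  intro t
  have key : Y t = Z t := by
    have hmem : t ∈ Set.Icc (-(|t| + 1)) (|t| + 1) := by
      constructor <;> [nlinarith [abs_nonneg t, neg_abs_le t]; nlinarith [le_abs_self t]]
    have := ODE_solution_unique_of_mem_Icc
      (v := fun _ y => M *ᵥ y) (s := fun _ => Set.univ) (K := ‖L‖₊)
      (f := Y) (g := Z) (a := -(|t| + 1)) (b := |t| + 1) (t₀ := 0)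
      (fun s _ => (hlip s).lipschitzOnWith)
      (by constructor <;> [nlinarith [abs_nonneg t]; nlinarith [abs_nonneg t]])
      (fun s _ => (hY s).continuousAt.continuousWithinAt)
      (fun s _ => hY s)
      (fun _ _ => Set.mem_univ _)
      (fun s _ => (hZderiv s).continuousAt.continuousWithinAt)
      (fun s _ => hZderiv s)
      (fun _ _ => Set.mem_univ _)
      (by rw [hY0, hZ0])
    exact this hmem
  rw [key, hZdef]
  simp only []
  apply Finset.sum_congr (by simp)
  intro j _
  rw [mul_pow]
  simp
end
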